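/- Let S be a reachable set with liquidity cone K and define the canonical trading function φ(R) = sup{λ : (R, λ) ∈ K} (with φ(R) = 0 if the set is empty). Then φ is concave on ℝ₊ⁿ. -/

import Mathlib

theorem canonical_trading_function_concave (n : ℕ) (S : Set (Fin n → ℝ))
    (hS0 : ∀ R ∈ S, 0 ≤ R) (hS1 : S.Nonempty) (hS2 : IsClosed S) (hS3 : Convex ℝ S)
    (hS4 : ∀ R ∈ S, ∀ R' : Fin n → ℝ, R ≤ R' → R' ∈ S)
    (K : Set ((Fin n → ℝ) × ℝ))
    (hK : K = closure {p : (Fin n → ℝ) × ℝ | 0 < p.2 ∧ p.2⁻¹ • p.1 ∈ S})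
    (φ : (Fin n → ℝ) → ℝ)
    (hφ : ∀ R, φ R = sSup {lam : ℝ | (R, lam) ∈ K}) :
    ConcaveOn ℝ {R : Fin n → ℝ | 0 ≤ R} φ := by
  obtain ⟨R₀, hR₀⟩ := hS1
  set C : Set ((Fin n → ℝ) × ℝ) := {p : (Fin n → ℝ) × ℝ | 0 < p.2 ∧ p.2⁻¹ • p.1 ∈ S}
    with hC
  -- C is convex
  have hCconv : Convex ℝ C := by
    rintro ⟨R₁, l₁⟩ ⟨hl₁, hm₁⟩ ⟨R₂, l₂⟩ ⟨hl₂, hm₂⟩ a b ha hb hab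
    simp only [Prod.smul_mk, Prod.mk_add_mk, smul_eq_mul, hC, Set.mem_setOf_eq] at *
    have hl : 0 < a * l₁ + b * l₂ := by
      rcases ha.lt_or_eq with h | h
      · have : 0 < a * l₁ := mul_pos h hl₁
        nlinarith [mul_nonneg hb hl₂.le]
      · have hb1 : b = 1 := by linarith
        simp [← h, hb1, hl₂]
    refine ⟨hl, ?_⟩
    have key : (a * l₁ + b * l₂)⁻¹ • (a • R₁ + b • R₂) =
        (a * l₁ / (a * l₁ + b * l₂)) • (l₁⁻¹ • R₁) +
        (b * l₂ / (a * l₁ + b * l₂)) • (l₂⁻¹ • R₂) := by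
      rw [smul_add, smul_smul, smul_smul, smul_smul, smul_smul]
      congr 1 <;> congr 1 <;> field_simp <;> ring
    rw [key]
    exact hS3 hm₁ hm₂ (by positivity) (by positivity)
      (by field_simp)
  have hKconv : Convex ℝ K := hK ▸ hCconv.closure
  have hKclosed : IsClosed K := hK ▸ isClosed_closure
  -- K is a cone
  have hKcone : ∀ c : ℝ, 0 < c → ∀ p ∈ K, c • p ∈ K := by
    intro c hc p hp
    rw [hK] at hp ⊢
    refine map_mem_closure (continuous_const_smul c) hp ?_
    rintro ⟨R, l⟩ ⟨hl, hm⟩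
    refine ⟨mul_pos hc hl, ?_⟩
    show ((c * l)⁻¹) • (c • R) ∈ S
    have : (c * l)⁻¹ • c • R = l⁻¹ • R := by
      rw [smul_smul, mul_inv, mul_comm c⁻¹ l⁻¹, mul_assoc, inv_mul_cancel₀ hc.ne', mul_one]
    rw [this]; exact hm
  -- K is closed under addition
  have hKadd : ∀ p ∈ K, ∀ q ∈ K, p + q ∈ K := by
    intro p hp q hq
    have h2 : (2 : ℝ) • ((1/2 : ℝ) • p + (1/2 : ℝ) • q) ∈ K :=
      hKcone 2 (by norm_num) _ (hKconv hp hq (by norm_num) (by norm_num) (by norm_num))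
    have : (2 : ℝ) • ((1/2 : ℝ) • p + (1/2 : ℝ) • q) = p + q := by
      rw [smul_add, smul_smul, smul_smul]; norm_num
    rwa [this] at h2
  -- (R, 0) ∈ K for all R ≥ 0
  have hbase : ∀ R : Fin n → ℝ, 0 ≤ R → ((R, (0:ℝ)) : (Fin n → ℝ) × ℝ) ∈ K := by
    intro R hR
    rw [hK]
    have htend : Filter.Tendsto (fun t : ℝ => ((R + t • R₀, t) : (Fin n → ℝ) × ℝ))
        (nhdsWithin 0 (Set.Ioi 0)) (nhds (R, 0)) := by
      have h1 : Filter.Tendsto (fun t : ℝ => R + t • R₀) (nhdsWithin 0 (Set.Ioi 0))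
          (nhds (R + (0:ℝ) • R₀)) := by
        exact (Filter.Tendsto.smul_const (tendsto_nhdsWithin_of_tendsto_nhds
          Filter.tendsto_id) R₀).const_add R
      have : R + (0:ℝ) • R₀ = R := by simp
      rw [this] at h1
      exact h1.prodMk_nhds (tendsto_nhdsWithin_of_tendsto_nhds Filter.tendsto_id)
    refine mem_closure_of_tendsto htend ?_
    filter_upwards [self_mem_nhdsWithin] with t ht
    have ht' : (0:ℝ) < t := ht
    refine ⟨ht', ?_⟩
    have : t⁻¹ • (R + t • R₀) = t⁻¹ • R + R₀ := by
      rw [smul_add, smul_smul, inv_mul_cancel₀ ht'.ne', one_smul]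
    rw [this]
    exact hS4 R₀ hR₀ _ (le_add_of_nonneg_left (smul_nonneg (inv_nonneg.mpr ht'.le) hR))
  -- slices are closed
  have hslice_closed : ∀ R : Fin n → ℝ, IsClosed {lam : ℝ | ((R, lam) : (Fin n → ℝ) × ℝ) ∈ K} :=
    fun R => hKclosed.preimage (Continuous.prodMk continuous_const continuous_id)
  -- domain convexity
  have hdom : Convex ℝ {R : Fin n → ℝ | 0 ≤ R} := by
    intro x hx y hy a b ha hb hab
    exact add_nonneg (smul_nonneg ha hx) (smul_nonneg hb (show (0 : Fin n → ℝ) ≤ y from hy))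
  by_cases hbdd : ∀ R : Fin n → ℝ, 0 ≤ R → BddAbove {lam : ℝ | ((R, lam) : (Fin n → ℝ) × ℝ) ∈ K}
  · -- bounded case: sup attained
    have hmem : ∀ R : Fin n → ℝ, 0 ≤ R → ((R, φ R) : (Fin n → ℝ) × ℝ) ∈ K := by
      intro R hR
      rw [hφ R]
      exact (hslice_closed R).csSup_mem ⟨0, hbase R hR⟩ (hbdd R hR)
    refine ⟨hdom, ?_⟩
    intro x hx y hy a b ha hb hab
    have hx' := hmem x hx
    have hy' := hmem y hy
    have hcomb := hKconv hx' hy' ha hb hab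
    have heq : a • ((x, φ x) : (Fin n → ℝ) × ℝ) + b • (y, φ y)
        = (a • x + b • y, a * φ x + b * φ y) := by
      simp [Prod.ext_iff, smul_eq_mul]
    rw [heq] at hcomb
    have hxy : (0 : Fin n → ℝ) ≤ a • x + b • y := hdom hx hy ha hb hab
    rw [hφ (a • x + b • y)]
    exact le_csSup (hbdd _ hxy) hcomb
  · -- unbounded case: φ = 0 on the domain
    push_neg at hbdd
    obtain ⟨R₁, hR₁, hub⟩ := hbdd
    -- (0, 1) ∈ K
    have h01 : ((0, (1:ℝ)) : (Fin n → ℝ) × ℝ) ∈ K := by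
      rw [not_bddAbove_iff] at hub
      choose lam hlam hlam' using fun k : ℕ => hub k
      have hlampos : ∀ k : ℕ, (0:ℝ) < lam k := fun k =>
        lt_of_le_of_lt (Nat.cast_nonneg k) (hlam' k)
      have hmemk : ∀ k : ℕ, (((lam k)⁻¹ • R₁, (1:ℝ)) : (Fin n → ℝ) × ℝ) ∈ K := by
        intro k
        have := hKcone (lam k)⁻¹ (inv_pos.mpr (hlampos k)) _ (hlam k)
        simpa [Prod.smul_mk, smul_eq_mul, inv_mul_cancel₀ (hlampos k).ne'] using this
      have htop : Filter.Tendsto lam Filter.atTop Filter.atTop :=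
        Filter.tendsto_atTop_mono (fun k => (hlam' k).le)
          tendsto_natCast_atTop_atTop
      have hinv : Filter.Tendsto (fun k => (lam k)⁻¹) Filter.atTop (nhds 0) :=
        Filter.Tendsto.comp tendsto_inv_atTop_zero htop
      have htend : Filter.Tendsto (fun k => (((lam k)⁻¹ • R₁, (1:ℝ)) : (Fin n → ℝ) × ℝ))
          Filter.atTop (nhds (0, 1)) := by
        have h1 : Filter.Tendsto (fun k => (lam k)⁻¹ • R₁) Filter.atTop
            (nhds ((0:ℝ) • R₁)) := hinv.smul_const R₁
        rw [zero_smul] at h1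
        exact h1.prodMk_nhds tendsto_const_nhds
      exact hKclosed.mem_of_tendsto htend (Filter.Eventually.of_forall hmemk)
    -- all slices are unbounded
    have hall : ∀ R : Fin n → ℝ, 0 ≤ R →
        ¬BddAbove {lam : ℝ | ((R, lam) : (Fin n → ℝ) × ℝ) ∈ K} := by
      intro R hR hb
      have hsub : Set.Ici (0:ℝ) ⊆ {lam : ℝ | ((R, lam) : (Fin n → ℝ) × ℝ) ∈ K} := by
        intro t ht
        rcases eq_or_lt_of_le (show (0:ℝ) ≤ t from ht) with h | h
        · rw [← h]; exact hbase R hR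
        · have h0t : ((0, t) : (Fin n → ℝ) × ℝ) ∈ K := by
            have := hKcone t h _ h01
            simpa using this
          have := hKadd _ (hbase R hR) _ h0t
          simpa using this
      exact not_bddAbove_Ici (0:ℝ) (hb.mono hsub)
    have hzero : ∀ R : Fin n → ℝ, 0 ≤ R → φ R = 0 := by
      intro R hR
      rw [hφ R]
      exact Real.sSup_of_not_bddAbove (hall R hR)
    refine ⟨hdom, ?_⟩
    intro x hx y hy a b ha hb hab
    rw [hzero x hx, hzero y hy, hzero _ (hdom hx hy ha hb hab)]
    simp
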